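/- Let n > 1 be an integer, let R = ℤ/nℤ, and let R^× be its group of units. Let D be a positive integer such that there exists a multiset over R^× of cardinality D − 1 having no nonempty sub-multiset with product 1 (i.e., D − 1 is less than the Davenport constant of R^×). Then there exists a multiset over R of cardinality D − 1 + Ω(n) − ω(n) having no nonempty sub-multiset whose product is an idempotent of R; consequently the n-modular Erdős–Burgess constant is at least D + Ω(n) − ω(n). -/

import Mathlib

/-- The `n`-modular Erdős–Burgess constant: the smallest positive integer `ℓ` such that
every multiset over `ℤ/nℤ` of cardinality `ℓ` has a nonempty sub-multiset whose product is
idempotent. -/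
noncomputable def modularErdosBurgess (n : ℕ) : ℕ :=
  sInf {ℓ : ℕ | 0 < ℓ ∧ ∀ T : Multiset (ZMod n), T.card = ℓ →
    ∃ W : Multiset (ZMod n), W ≤ T ∧ W ≠ 0 ∧ W.prod * W.prod = W.prod}

section aux

open Multiset

/-- Splitting a sub-multiset of a sum. -/
lemma aux_split {α : Type*} [DecidableEq α] {W A B : Multiset α} (h : W ≤ A + B) :
    ∃ W₁ W₂, W₁ ≤ A ∧ W₂ ≤ B ∧ W = W₁ + W₂ := by
  refine ⟨W ∩ A, W - W ∩ A, Multiset.inter_le_right, ?_,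
    (add_tsub_cancel_of_le (Multiset.inter_le_left)).symm⟩
  rw [Multiset.le_iff_count] at h ⊢
  intro a
  have := h a
  simp only [Multiset.count_sub, Multiset.count_inter, Multiset.count_add] at *
  omega

/-- A sub-multiset of a mapped multiset is the image of a sub-multiset. -/
lemma aux_pullback {α β : Type*} [DecidableEq α] [DecidableEq β] {f : α → β} :
    ∀ (W : Multiset β) (S : Multiset α), W ≤ S.map f → ∃ V, V ≤ S ∧ W = V.map f := by
  intro W
  induction W using Multiset.induction_on with
  | empty => exact fun S _ => ⟨0, Multiset.zero_le _, rfl⟩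
  | cons b W ih =>
    intro S h
    have hb : b ∈ S.map f := Multiset.mem_of_le h (Multiset.mem_cons_self _ _)
    obtain ⟨a, haS, rfl⟩ := Multiset.mem_map.mp hb
    have hS : S.map f = f a ::ₘ (S.erase a).map f := by
      conv_lhs => rw [← Multiset.cons_erase haS]
      rw [Multiset.map_cons]
    have h' : W ≤ (S.erase a).map f := by
      have h2 := Multiset.erase_le_erase (f a) h
      rwa [Multiset.erase_cons_head, hS, Multiset.erase_cons_head] at h2
    obtain ⟨V, hV, rfl⟩ := ih (S.erase a) h'
    exact ⟨a ::ₘ V, (Multiset.cons_le_cons a hV).trans_eq (Multiset.cons_erase haS),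
      by rw [Multiset.map_cons]⟩

/-- Factorization of a product of primes counts multiplicity. -/
lemma aux_fact (p : ℕ) :
    ∀ (N : Multiset ℕ), (∀ q ∈ N, Nat.Prime q) →
      (N.prod).factorization p = N.count p := by
  intro N
  induction N using Multiset.induction_on with
  | empty => simp
  | cons a N ih =>
    intro h
    have ha : a.Prime := h a (Multiset.mem_cons_self _ _)
    have hN : ∀ q ∈ N, Nat.Prime q := fun q hq => h q (Multiset.mem_cons_of_mem hq)
    have hprod : N.prod ≠ 0 := by
      intro h0
      rw [Multiset.prod_eq_zero_iff] at h0
      exact (hN 0 h0).ne_zero rfl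
    rw [Multiset.prod_cons, Nat.factorization_mul ha.ne_zero hprod, Finsupp.add_apply,
      ih hN, ha.factorization, Multiset.count_cons, Finsupp.single_apply]
    split_ifs with h1 h2 h2 <;> omega

/-- Existence of a bounded idempotent power. -/
lemma aux_idem_pow {n : ℕ} (hn : 1 < n) (x : ZMod n) :
    ∃ k, 1 ≤ k ∧ k ≤ (n + 1) * n ∧ x ^ k * x ^ k = x ^ k := by
  haveI : NeZero n := ⟨by omega⟩
  have main : ∀ i j : Fin (n + 1), (i : ℕ) < (j : ℕ) →
      x ^ ((i : ℕ) + 1) = x ^ ((j : ℕ) + 1) →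
      ∃ k, 1 ≤ k ∧ k ≤ (n + 1) * n ∧ x ^ k * x ^ k = x ^ k := by
    intro i j hlt hpow
    set m := (i : ℕ) + 1 with hm
    set d := (j : ℕ) - (i : ℕ) with hd
    have hd1 : 1 ≤ d := by omega
    have hkey : x ^ m = x ^ (m + d) := by
      have hjd : (j : ℕ) + 1 = m + d := by omega
      rw [hpow, hjd]
    have hstep : ∀ s, m ≤ s → x ^ s = x ^ (s + d) := by
      intro s hs
      have hsm : s = (s - m) + m := by omega
      rw [hsm, pow_add, hkey, ← pow_add]
      congr 1
      omega
    have hiter : ∀ t s, m ≤ s → x ^ s = x ^ (s + t * d) := by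
      intro t
      induction t with
      | zero => simp
      | succ t iht =>
        intro s hs
        rw [iht s hs, hstep (s + t * d) (by omega)]
        congr 1
        ring
    have hi := i.isLt
    have hj := j.isLt
    refine ⟨m * d, Nat.mul_pos (by omega) hd1, ?_, ?_⟩
    · exact Nat.mul_le_mul (by omega) (by omega)
    · rw [← pow_add]
      have hit := hiter m (m * d) (Nat.le_mul_of_pos_right m hd1)
      rw [← hit]
  have hcard : Fintype.card (ZMod n) < Fintype.card (Fin (n + 1)) := by
    simp [ZMod.card]
  obtain ⟨i, j, hij, hpow⟩ := Fintype.exists_ne_map_eq_of_card_lt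
    (fun i : Fin (n + 1) => x ^ ((i : ℕ) + 1)) (by simpa using hcard)
  rcases Nat.lt_or_ge (i : ℕ) (j : ℕ) with hlt | hge
  · exact main i j hlt hpow
  · have hlt' : (j : ℕ) < (i : ℕ) := by
      rcases Nat.lt_or_ge (j : ℕ) (i : ℕ) with h | h
      · exact h
      · exact absurd (Fin.ext (by omega)) hij
    exact main j i hlt' hpow.symm

/-- The defining set of the Erdős–Burgess constant is nonempty. -/
lemma aux_nonempty {n : ℕ} (hn : 1 < n) :
    (n * ((n + 1) * n)) ∈ {ℓ : ℕ | 0 < ℓ ∧ ∀ T : Multiset (ZMod n), T.card = ℓ →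
      ∃ W : Multiset (ZMod n), W ≤ T ∧ W ≠ 0 ∧ W.prod * W.prod = W.prod} := by
  haveI : NeZero n := ⟨by omega⟩
  set B := (n + 1) * n with hB
  have hB1 : 1 ≤ B := Nat.one_le_iff_ne_zero.mpr (by positivity)
  refine ⟨by positivity, fun T hT => ?_⟩
  -- pigeonhole: some element occurs at least B times
  have hx : ∃ x : ZMod n, B ≤ T.count x := by
    by_contra hcon
    push_neg at hcon
    have h1 : T.card = ∑ a ∈ T.toFinset, T.count a := (Multiset.toFinset_sum_count_eq T).symm
    have h2 : ∑ a ∈ T.toFinset, T.count a ≤ ∑ _a ∈ T.toFinset, (B - 1) :=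
      Finset.sum_le_sum fun a _ => by have := hcon a; omega
    have h3 : T.toFinset.card ≤ n := by
      have := Finset.card_le_univ T.toFinset
      simpa [ZMod.card] using this
    rw [Finset.sum_const, smul_eq_mul] at h2
    have : T.card ≤ n * (B - 1) := by
      calc T.card = ∑ a ∈ T.toFinset, T.count a := h1
        _ ≤ T.toFinset.card * (B - 1) := h2
        _ ≤ n * (B - 1) := Nat.mul_le_mul_right _ h3
    rw [hT] at this
    have hBe : n * B = n * (B - 1) + n := by
      have hB' : B = (B - 1) + 1 := by omega
      calc n * B = n * ((B - 1) + 1) := by rw [← hB']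
        _ = n * (B - 1) + n := by ring
    omega
  obtain ⟨x, hx⟩ := hx
  obtain ⟨k, hk1, hkB, hidem⟩ := aux_idem_pow hn x
  refine ⟨Multiset.replicate k x, ?_, ?_, ?_⟩
  · rw [← Multiset.le_count_iff_replicate_le]
    exact hkB.trans hx
  · intro h0
    have hc := congrArg Multiset.card h0
    simp [Multiset.card_replicate] at hc
    omega
  · rw [Multiset.prod_replicate]
    exact hidem

end aux

/-- If there is a multiset over `(ℤ/nℤ)ˣ` of cardinality `D - 1` with no nonempty
sub-multiset of product `1`, then there is a multiset over `ℤ/nℤ` of cardinality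
`D - 1 + Ω(n) - ω(n)` with no nonempty sub-multiset of idempotent product; consequently
the `n`-modular Erdős–Burgess constant is at least `D + Ω(n) - ω(n)`. -/
theorem stmt_2 (n : ℕ) (hn : 1 < n) (D : ℕ) (hD : 0 < D)
    (hex : ∃ S : Multiset (ZMod n)ˣ, S.card = D - 1 ∧
      ∀ W : Multiset (ZMod n)ˣ, W ≤ S → W ≠ 0 → W.prod ≠ 1) :
    (∃ T : Multiset (ZMod n),
        T.card = D - 1 + n.primeFactorsList.length - n.primeFactors.card ∧
        ∀ W : Multiset (ZMod n), W ≤ T → W ≠ 0 → W.prod * W.prod ≠ W.prod) ∧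
      D + n.primeFactorsList.length - n.primeFactors.card ≤ modularErdosBurgess n := by
  classical
  haveI : NeZero n := ⟨by omega⟩
  obtain ⟨S, hScard, hS⟩ := hex
  set L : Multiset ℕ := (n.primeFactorsList : Multiset ℕ) with hL
  set P : Multiset ℕ := L - L.dedup with hP
  have hPle : P ≤ L := tsub_le_self
  have hPmem : ∀ q ∈ P, q.Prime ∧ q ∣ n := by
    intro q hq
    have hq' : q ∈ n.primeFactorsList := by
      have := Multiset.mem_of_le hPle hq
      simpa [hL] using this
    exact ⟨Nat.prime_of_mem_primeFactorsList hq', Nat.dvd_of_mem_primeFactorsList hq'⟩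
  have hdedupcard : Multiset.card L.dedup = n.primeFactors.card := by
    rw [hL, Multiset.coe_dedup]
    rw [Nat.primeFactors, List.card_toFinset]
    simp
  have hωΩ : n.primeFactors.card ≤ n.primeFactorsList.length := by
    have h1 := Multiset.card_le_card (Multiset.dedup_le L)
    rw [hdedupcard] at h1
    simpa [hL] using h1
  have hPcard : Multiset.card P = n.primeFactorsList.length - n.primeFactors.card := by
    have h1 : P + L.dedup = L := tsub_add_cancel_of_le (Multiset.dedup_le L)
    have h2 := congrArg Multiset.card h1
    rw [Multiset.card_add, hdedupcard] at h2
    have h3 : Multiset.card L = n.primeFactorsList.length := by simp [hL]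
    omega
  have hPcount : ∀ p ∈ P, P.count p = n.factorization p - 1 := by
    intro p hp
    have hpL : p ∈ L := Multiset.mem_of_le hPle hp
    rw [hP, Multiset.count_sub, Multiset.count_dedup, if_pos hpL]
    rw [hL, Multiset.coe_count, Nat.primeFactorsList_count_eq]
  set T : Multiset (ZMod n) :=
    S.map (Units.val) + P.map (Nat.cast : ℕ → ZMod n) with hT
  have hTcard : Multiset.card T
      = D - 1 + n.primeFactorsList.length - n.primeFactors.card := by
    rw [hT, Multiset.card_add, Multiset.card_map, Multiset.card_map, hScard, hPcard]
    omega
  have hTprop : ∀ W : Multiset (ZMod n), W ≤ T → W ≠ 0 →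
      W.prod * W.prod ≠ W.prod := by
    intro W hW hW0 hidem
    obtain ⟨W₁, W₂, h₁, h₂, hWeq⟩ := aux_split hW
    obtain ⟨V, hVS, hV⟩ := aux_pullback W₁ S h₁
    obtain ⟨N, hNP, hNeq⟩ := aux_pullback W₂ P h₂
    subst hV hNeq hWeq
    have hNprime : ∀ q ∈ N, q.Prime := fun q hq =>
      (hPmem q (Multiset.mem_of_le hNP hq)).1
    set u : (ZMod n)ˣ := V.prod with hu
    set m : ℕ := N.prod with hm
    have hup : (V.map (Units.val)).prod = (u : ZMod n) :=
      Multiset.prod_hom V (Units.coeHom (ZMod n))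
    have hmp : (N.map (Nat.cast : ℕ → ZMod n)).prod = (m : ZMod n) :=
      Multiset.prod_hom N (Nat.castRingHom (ZMod n)).toMonoidHom
    rw [Multiset.prod_add, hup, hmp] at hidem
    have key : (↑m : ZMod n) * (↑u * ↑m) = ↑m := by
      have h3 : (↑u⁻¹ : ZMod n) * (((↑u : ZMod n) * ↑m) * ((↑u : ZMod n) * ↑m))
          = (↑u⁻¹ : ZMod n) * ((↑u : ZMod n) * ↑m) := by rw [hidem]
      rw [Units.inv_mul_cancel_left, mul_assoc, Units.inv_mul_cancel_left] at h3
      exact h3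
    have hN0 : N = 0 := by
      by_contra hne
      obtain ⟨p, hpN⟩ := Multiset.exists_mem_of_ne_zero hne
      have hp : p.Prime := hNprime p hpN
      have hpP : p ∈ P := Multiset.mem_of_le hNP hpN
      have hpn : p ∣ n := (hPmem p hpP).2
      set e := n.factorization p with he
      have he1 : 1 ≤ e := hp.factorization_pos_of_dvd (by omega) hpn
      have hcount : N.count p ≤ e - 1 := by
        have hc1 := Multiset.count_le_of_le p hNP
        have hc2 := hPcount p hpP
        omega
      set a : ℤ := (((u : ZMod n).val : ℕ) : ℤ) with ha0
      have ha : ((a : ℤ) : ZMod n) = (↑u : ZMod n) := by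
        rw [ha0]
        push_cast
        exact ZMod.natCast_rightInverse _
      have hdvd : (n : ℤ) ∣ (m : ℤ) * (a * m - 1) := by
        have h4 : ((((m : ℤ) * (a * m - 1)) : ℤ) : ZMod n) = 0 := by
          push_cast
          rw [ha]
          linear_combination key
        exact (ZMod.intCast_zmod_eq_zero_iff_dvd _ _).mp h4
      have hpe : ((p : ℤ))^e ∣ (m : ℤ) * (a * m - 1) := by
        refine dvd_trans ?_ hdvd
        exact_mod_cast Int.natCast_dvd_natCast.mpr (Nat.ordProj_dvd n p)
      have hpm : p ∣ m := Multiset.dvd_prod hpN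
      have hnotdvd : ¬ (p : ℤ) ∣ (a * (m : ℤ) - 1) := by
        intro hdvd1
        have h5 : (p : ℤ) ∣ a * (m : ℤ) :=
          Dvd.dvd.mul_left (Int.natCast_dvd_natCast.mpr hpm) a
        have h6 : (p : ℤ) ∣ (1 : ℤ) := by
          have := dvd_sub h5 hdvd1
          simpa using this
        have h7 : p ∣ 1 := by exact_mod_cast h6
        exact hp.one_lt.ne' (Nat.dvd_one.mp h7)
      have hcop : IsCoprime ((p : ℤ)^e) (a * (m : ℤ) - 1) :=
        ((Nat.prime_iff_prime_int.mp hp).coprime_iff_not_dvd.mpr hnotdvd).pow_left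
      have hpowm : ((p : ℤ))^e ∣ (m : ℤ) := hcop.dvd_of_dvd_mul_right hpe
      have hpowmN : p^e ∣ m := by exact_mod_cast hpowm
      have hm0 : m ≠ 0 := by
        rw [hm]
        intro h0
        rw [Multiset.prod_eq_zero_iff] at h0
        exact (hNprime 0 h0).ne_zero rfl
      have hle : e ≤ m.factorization p :=
        (Nat.Prime.pow_dvd_iff_le_factorization hp hm0).mp hpowmN
      rw [hm, aux_fact p N hNprime] at hle
      omega
    subst hN0
    have hV0 : V ≠ 0 := by
      rintro rfl
      simp at hW0
    have humul : u * u = u := by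
      apply Units.ext
      have : (m : ZMod n) = 1 := by simp [hm]
      rw [this, mul_one] at hidem
      exact_mod_cast hidem
    have hu1 : u = 1 := by
      have h8 : u * u = u * 1 := by rw [mul_one]; exact humul
      exact mul_left_cancel h8
    exact hS V hVS hV0 hu1
  refine ⟨⟨T, hTcard, hTprop⟩, ?_⟩
  have hne : ({ℓ : ℕ | 0 < ℓ ∧ ∀ T : Multiset (ZMod n), T.card = ℓ →
      ∃ W : Multiset (ZMod n), W ≤ T ∧ W ≠ 0 ∧ W.prod * W.prod = W.prod}).Nonempty :=
    ⟨_, aux_nonempty hn⟩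
  rw [modularErdosBurgess]
  refine le_csInf hne ?_
  intro ℓ hℓ
  by_contra hcon
  push_neg at hcon
  have hl1 : 0 < ℓ := hℓ.1
  have hlle : ℓ ≤ Multiset.card T := by
    rw [hTcard]
    omega
  set T' : Multiset (ZMod n) := ((T.toList.take ℓ : List (ZMod n)) : Multiset (ZMod n))
    with hT'
  have hT'le : T' ≤ T := by
    have h7 : List.Sublist (T.toList.take ℓ) T.toList := List.take_sublist _ _
    have h8 : T' ≤ (T.toList : Multiset (ZMod n)) := h7.subperm
    rwa [Multiset.coe_toList] at h8
  have hT'card : Multiset.card T' = ℓ := by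
    rw [hT', Multiset.coe_card, List.length_take, Multiset.length_toList]
    omega
  obtain ⟨W, hWle, hW0, hWid⟩ := hℓ.2 T' hT'card
  exact hTprop W (hWle.trans hT'le) hW0 hWid
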